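/- Suppose ⟨∇²f(x⁰) u, u⟩ ≤ L₁·‖u‖² for all u ∈ E (which holds when ∇f is L₁-Lipschitz). Let c > 0, ρ ∈ [0,1], η ∈ (0,1), suppose r(x⁰) > 0, and set μ = c·r(x⁰)^ρ and H = ∇²f(x⁰) + μ·Id. Let x̃ be a minimizer of q over E and let x̂ ∈ E satisfy r_H(x̂) ≤ η·r(x⁰)^{1+ρ}, where r_H(x) = ‖x − prox_g(x − ∇f(x⁰) − H(x − x⁰))‖. Then ‖x̂ − x̃‖ ≤ (η·(L₁ + |1 − μ|)/c)·r(x⁰) + η·r(x⁰)^{1+ρ}. -/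

import Mathlib

open scoped RealInnerProductSpace

abbrev E (n : ℕ) := EuclideanSpace ℝ (Fin n)

lemma aux_small_t {X B : ℝ} (h : ∀ t : ℝ, t ∈ Set.Ioc (0:ℝ) 1 → 0 ≤ X + t * B) : 0 ≤ X := by
  by_contra hX
  push_neg at hX
  rcases le_or_gt B 0 with hB | hB
  · have := h 1 ⟨one_pos, le_rfl⟩; nlinarith
  · have ht : 0 < (-X)/(2*B) := div_pos (by linarith) (by linarith)
    set t := min 1 ((-X)/(2*B)) with htdef
    have h1 : 0 < t := lt_min one_pos ht
    have h2 := h t ⟨h1, min_le_left _ _⟩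
    have h3 : t ≤ (-X)/(2*B) := min_le_right _ _
    have h4 : t * (2*B) ≤ -X := (le_div_iff₀ (by positivity)).mp h3
    nlinarith

lemma psd_of_convex {n : ℕ} (f : E n → ℝ) (f' : E n → E n)
    (hess : E n → E n →L[ℝ] E n)
    (hfconv : ConvexOn ℝ Set.univ f)
    (hgrad : ∀ x, HasGradientAt f (f' x) x)
    (hhess : ∀ x, HasFDerivAt f' (hess x) x)
    (x₀ u : E n) : 0 ≤ ⟪hess x₀ u, u⟫ := by
  set φ : ℝ → ℝ := fun t => f (t • u + x₀) with hφ
  set ψ : ℝ → ℝ := fun t => ⟪f' (t • u + x₀), u⟫ with hψ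
  have hline : ∀ t : ℝ, HasDerivAt (fun s : ℝ => s • u + x₀) u t := fun t => by
    simpa using ((hasDerivAt_id t).smul_const u).add_const x₀
  have hφconv : ConvexOn ℝ Set.univ φ := by
    have h := hfconv.comp_affineMap (AffineMap.lineMap x₀ (x₀ + u) : ℝ →ᵃ[ℝ] E n)
    have heq : (f ∘ (AffineMap.lineMap x₀ (x₀ + u) : ℝ →ᵃ[ℝ] E n)) = φ := by
      funext t
      show f _ = f _
      congr 1
      simp [AffineMap.lineMap_apply, add_sub_cancel_left, add_comm]
    rw [heq] at h
    simpa using h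
  have hφd : ∀ t, HasDerivAt φ (ψ t) t := fun t => by
    have := ((hgrad (t • u + x₀)).hasFDerivAt).comp_hasDerivAt t (hline t)
    simpa [hφ, hψ, Function.comp_def, InnerProductSpace.toDual_apply_apply] using this
  have hψ0 : HasDerivAt ψ (⟪hess x₀ u, u⟫) 0 := by
    have h1 : HasDerivAt (fun t : ℝ => f' (t • u + x₀)) (hess x₀ u) 0 := by
      have h0 : (0:ℝ) • u + x₀ = x₀ := by simp
      have := (h0 ▸ hhess x₀).comp_hasDerivAt 0 (hline 0)
      simpa [Function.comp_def] using this
    have h2 : HasDerivAt (fun _ : ℝ => u) (0 : E n) 0 := hasDerivAt_const _ _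
    simpa [hψ] using h1.inner ℝ h2
  have hmono : ∀ t : ℝ, 0 < t → ψ 0 ≤ ψ t := by
    intro t ht
    have h1 : ψ 0 ≤ slope φ 0 t :=
      hφconv.le_slope_of_hasDerivAt (Set.mem_univ 0) (Set.mem_univ t) ht (hφd 0)
    have h2 : slope φ 0 t ≤ ψ t :=
      hφconv.slope_le_of_hasDerivAt (Set.mem_univ 0) (Set.mem_univ t) ht (hφd t)
    linarith
  have hts : Filter.Tendsto (slope ψ 0) (nhdsWithin 0 (Set.Ioi 0)) (nhds (⟪hess x₀ u, u⟫)) := by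
    have := hasDerivAt_iff_tendsto_slope.mp hψ0
    exact this.mono_left (nhdsWithin_mono 0 (fun x hx => ne_of_gt hx))
  refine ge_of_tendsto hts ?_
  filter_upwards [self_mem_nhdsWithin] with t ht
  have : 0 ≤ ψ t - ψ 0 := sub_nonneg.mpr (hmono t ht)
  rw [slope_def_field]
  have ht' : (0:ℝ) < t := ht
  exact div_nonneg this (by linarith)

lemma bilin_bound {n : ℕ} (A : E n →L[ℝ] E n)
    (hsa : ∀ u w, ⟪A u, w⟫ = ⟪u, A w⟫)
    (hpsd : ∀ u, 0 ≤ ⟪A u, u⟫) {L : ℝ} (hL : 0 ≤ L)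
    (hub : ∀ u, ⟪A u, u⟫ ≤ L * ‖u‖ ^ 2)
    (u v : E n) : |⟪A u, v⟫| ≤ L * ‖u‖ * ‖v‖ := by
  rcases eq_or_ne u 0 with rfl | hu
  · simp
  rcases eq_or_ne v 0 with rfl | hv
  · simp
  have hun : 0 < ‖u‖ := norm_pos_iff.mpr hu
  have hvn : 0 < ‖v‖ := norm_pos_iff.mpr hv
  set s : ℝ := Real.sqrt (‖v‖ / ‖u‖) with hs
  have hspos : 0 < s := Real.sqrt_pos.mpr (div_pos hvn hun)
  have hs2 : s ^ 2 = ‖v‖ / ‖u‖ := Real.sq_sqrt (le_of_lt (div_pos hvn hun))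
  set u' := s • u with hu'
  set v' := s⁻¹ • v with hv'
  have hnu' : ‖u'‖ ^ 2 = ‖u‖ * ‖v‖ := by
    rw [hu', norm_smul, mul_pow, Real.norm_eq_abs, sq_abs, hs2]
    field_simp
  have hnv' : ‖v'‖ ^ 2 = ‖u‖ * ‖v‖ := by
    rw [hv', norm_smul, mul_pow, Real.norm_eq_abs, sq_abs, inv_pow, hs2]
    field_simp
  have hinner : ⟪A u', v'⟫ = ⟪A u, v⟫ := by
    rw [hu', hv', map_smul]
    rw [real_inner_smul_left, real_inner_smul_right]
    field_simp
  have hsym : ⟪A v', u'⟫ = ⟪A u', v'⟫ := by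
    rw [hsa, real_inner_comm]
  have key1 : ⟪A (u' + v'), u' + v'⟫ = ⟪A u', u'⟫ + 2 * ⟪A u', v'⟫ + ⟪A v', v'⟫ := by
    simp only [map_add, inner_add_left, inner_add_right]
    rw [hsym]; ring
  have key2 : ⟪A (u' - v'), u' - v'⟫ = ⟪A u', u'⟫ - 2 * ⟪A u', v'⟫ + ⟪A v', v'⟫ := by
    simp only [map_sub, inner_sub_left, inner_sub_right]
    rw [hsym]; ring
  have e1 : ‖u'‖ = Real.sqrt (‖u‖ * ‖v‖) := by
    rw [← hnu', Real.sqrt_sq (norm_nonneg _)]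
  have e2 : ‖v'‖ = Real.sqrt (‖u‖ * ‖v‖) := by
    rw [← hnv', Real.sqrt_sq (norm_nonneg _)]
  have hcs : |⟪u', v'⟫| ≤ ‖u‖ * ‖v‖ := by
    calc |⟪u', v'⟫| ≤ ‖u'‖ * ‖v'‖ := abs_real_inner_le_norm _ _
    _ = ‖u‖ * ‖v‖ := by
        rw [e1, e2, Real.mul_self_sqrt (by positivity)]
  obtain ⟨hcs1, hcs2⟩ := abs_le.mp hcs
  have h5 : L * ⟪u', v'⟫ ≤ L * (‖u‖ * ‖v‖) := mul_le_mul_of_nonneg_left hcs2 hL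
  have h6 : L * (-(‖u‖ * ‖v‖)) ≤ L * ⟪u', v'⟫ := mul_le_mul_of_nonneg_left hcs1 hL
  have hnp : ‖u' + v'‖ ^ 2 = ‖u'‖^2 + 2 * ⟪u', v'⟫ + ‖v'‖^2 := by
    rw [← real_inner_self_eq_norm_sq, ← real_inner_self_eq_norm_sq, ← real_inner_self_eq_norm_sq]
    simp only [inner_add_left, inner_add_right, real_inner_comm v' u']
    ring
  have hnm : ‖u' - v'‖ ^ 2 = ‖u'‖^2 - 2 * ⟪u', v'⟫ + ‖v'‖^2 := by
    rw [← real_inner_self_eq_norm_sq, ← real_inner_self_eq_norm_sq, ← real_inner_self_eq_norm_sq]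
    simp only [inner_sub_left, inner_sub_right, real_inner_comm v' u']
    ring
  have hplus2 : ⟪A (u' + v'), u' + v'⟫ ≤ 2 * (L * (‖u‖ * ‖v‖)) + 2 * (L * ⟪u', v'⟫) := by
    calc ⟪A (u' + v'), u' + v'⟫ ≤ L * ‖u' + v'‖ ^ 2 := hub _
    _ = L * (‖u‖ * ‖v‖ + 2 * ⟪u', v'⟫ + ‖u‖ * ‖v‖) := by rw [hnp, hnu', hnv']
    _ = 2 * (L * (‖u‖ * ‖v‖)) + 2 * (L * ⟪u', v'⟫) := by ring
  have hminus2 : ⟪A (u' - v'), u' - v'⟫ ≤ 2 * (L * (‖u‖ * ‖v‖)) - 2 * (L * ⟪u', v'⟫) := by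
    calc ⟪A (u' - v'), u' - v'⟫ ≤ L * ‖u' - v'‖ ^ 2 := hub _
    _ = L * (‖u‖ * ‖v‖ - 2 * ⟪u', v'⟫ + ‖u‖ * ‖v‖) := by rw [hnm, hnu', hnv']
    _ = 2 * (L * (‖u‖ * ‖v‖)) - 2 * (L * ⟪u', v'⟫) := by ring
  have hplus' := hpsd (u' + v')
  have hminus' := hpsd (u' - v')
  have hLc : L * ‖u‖ * ‖v‖ = L * (‖u‖ * ‖v‖) := by ring
  rw [← hinner, abs_le, hLc]
  constructor <;> linarith

set_option maxHeartbeats 1000000 in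
/-- If `⟨∇²f(x⁰)u,u⟩ ≤ L₁‖u‖²`, `c > 0`, `ρ ∈ [0,1]`, `η ∈ (0,1)`,
`r(x⁰) > 0`, `μ = c·r(x⁰)^ρ`, `H = ∇²f(x⁰) + μ·Id`, `x̃` minimizes `q`, and
`r_H(x̂) ≤ η·r(x⁰)^{1+ρ}`, then
`‖x̂ − x̃‖ ≤ (η(L₁ + |1 − μ|)/c)·r(x⁰) + η·r(x⁰)^{1+ρ}`. -/
theorem stmt9 {n : ℕ} (f g : E n → ℝ) (f' : E n → E n)
    (hess : E n → E n →L[ℝ] E n) (prox : E n → E n)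
    (hfconv : ConvexOn ℝ Set.univ f) (hfC2 : ContDiff ℝ 2 f)
    (hgrad : ∀ x, HasGradientAt f (f' x) x)
    (hhess : ∀ x, HasFDerivAt f' (hess x) x)
    (hsa : ∀ x u w, ⟪hess x u, w⟫ = ⟪u, hess x w⟫)
    (hgconv : ConvexOn ℝ Set.univ g) (hgcont : Continuous g)
    (hprox : ∀ v u, (1/2) * ‖prox v - v‖ ^ 2 + g (prox v) ≤ (1/2) * ‖u - v‖ ^ 2 + g u)
    (r : E n → ℝ) (hr : ∀ x, r x = ‖x - prox (x - f' x)‖)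
    (x₀ : E n) (L₁ c ρ η : ℝ)
    (hub : ∀ u, ⟪hess x₀ u, u⟫ ≤ L₁ * ‖u‖ ^ 2)
    (hc : 0 < c) (hρ : ρ ∈ Set.Icc (0:ℝ) 1) (hη : η ∈ Set.Ioo (0:ℝ) 1)
    (hrx₀ : 0 < r x₀)
    (μ : ℝ) (hμ : μ = c * r x₀ ^ ρ)
    (H : E n →L[ℝ] E n) (hH : H = hess x₀ + μ • ContinuousLinearMap.id ℝ (E n))
    (q : E n → ℝ)
    (hq : ∀ y, q y = f x₀ + ⟪f' x₀, y - x₀⟫ + (1/2) * ⟪H (y - x₀), y - x₀⟫ + g y)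
    (xt : E n) (hxt : ∀ y, q xt ≤ q y)
    (rH : E n → ℝ) (hrH : ∀ x, rH x = ‖x - prox (x - f' x₀ - H (x - x₀))‖)
    (xh : E n) (hxh : rH xh ≤ η * r x₀ ^ (1 + ρ)) :
    ‖xh - xt‖ ≤ (η * (L₁ + |1 - μ|) / c) * r x₀ + η * r x₀ ^ (1 + ρ) := by
  have hpsd : ∀ u, 0 ≤ ⟪hess x₀ u, u⟫ := fun u =>
    psd_of_convex f f' hess hfconv hgrad hhess x₀ u
  -- basic positivity facts
  have hμpos : 0 < μ := hμ ▸ mul_pos hc (Real.rpow_pos_of_pos hrx₀ ρ)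
  have hL1 : 0 ≤ L₁ := by
    set z := x₀ - prox (x₀ - f' x₀) with hz
    have hzn : 0 < ‖z‖ := by rw [hz, ← hr x₀]; exact hrx₀
    have h1 := hpsd z
    have h2 := hub z
    nlinarith [pow_pos hzn 2]
  -- H applied and self-adjointness of H
  have hHapp : ∀ u, H u = hess x₀ u + μ • u := by
    intro u; rw [hH]; simp
  have hHsa : ∀ u w, ⟪H u, w⟫ = ⟪u, H w⟫ := by
    intro u w
    rw [hHapp, hHapp, inner_add_left, inner_add_right, real_inner_smul_left,
      real_inner_smul_right, hsa]
  -- proximal subgradient inequality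
  have hproxsub : ∀ v u, 0 ≤ ⟪prox v - v, u - prox v⟫ + g u - g (prox v) := by
    intro v u
    apply aux_small_t (B := ‖u - prox v‖ ^ 2 / 2)
    intro t ⟨ht0, ht1⟩
    have key := hprox v (prox v + t • (u - prox v))
    have hexp : ‖prox v + t • (u - prox v) - v‖ ^ 2
        = ‖prox v - v‖ ^ 2 + 2 * t * ⟪prox v - v, u - prox v⟫
          + t ^ 2 * ‖u - prox v‖ ^ 2 := by
      have harg : prox v + t • (u - prox v) - v = (prox v - v) + t • (u - prox v) := by
        module
      rw [harg, norm_add_sq_real, real_inner_smul_right, norm_smul]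
      simp only [Real.norm_eq_abs, mul_pow, sq_abs]
      ring
    have hconv : g (prox v + t • (u - prox v)) ≤ (1 - t) * g (prox v) + t * g u := by
      have h := hgconv.2 (Set.mem_univ (prox v)) (Set.mem_univ u)
        (by linarith : (0:ℝ) ≤ 1 - t) ht0.le (by ring)
      have harg : (1 - t) • prox v + t • u = prox v + t • (u - prox v) := by module
      rw [harg] at h; exact h
    have h2 : 0 ≤ t * (⟪prox v - v, u - prox v⟫ + g u - g (prox v)
        + t * (‖u - prox v‖ ^ 2 / 2)) := by nlinarith
    nlinarith
  -- main objects
  set v : E n := xh - f' x₀ - H (xh - x₀) with hv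
  set p : E n := prox v with hp
  set e : E n := xh - p with he
  set w : E n := p - xt with hw
  -- minimizer subgradient inequality
  have hqsub : 0 ≤ ⟪f' x₀ + H (xt - x₀), w⟫ + g p - g xt := by
    have haux : 0 ≤ (⟪f' x₀, w⟫ + ⟪H (xt - x₀), w⟫ + g p - g xt) := by
      apply aux_small_t (B := ⟪H w, w⟫ / 2)
      intro t ⟨ht0, ht1⟩
      have key := hxt (xt + t • w)
      rw [hq xt, hq (xt + t • w)] at key
      have harg : xt + t • w - x₀ = (xt - x₀) + t • w := by module
      have hexp : ⟪H ((xt - x₀) + t • w), (xt - x₀) + t • w⟫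
          = ⟪H (xt - x₀), xt - x₀⟫ + 2 * t * ⟪H (xt - x₀), w⟫ + t ^ 2 * ⟪H w, w⟫ := by
        rw [map_add, map_smul, inner_add_left, inner_add_right, inner_add_right,
          real_inner_smul_right, real_inner_smul_left, real_inner_smul_left,
          real_inner_smul_right]
        rw [hHsa w (xt - x₀), real_inner_comm w (H (xt - x₀))]
        ring
      have hlin : ⟪f' x₀, (xt - x₀) + t • w⟫ = ⟪f' x₀, xt - x₀⟫ + t * ⟪f' x₀, w⟫ := by
        rw [inner_add_right, real_inner_smul_right]
      have hconv : g (xt + t • w) ≤ (1 - t) * g xt + t * g p := by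
        have h := hgconv.2 (Set.mem_univ xt) (Set.mem_univ p)
          (by linarith : (0:ℝ) ≤ 1 - t) ht0.le (by ring)
        have harg2 : (1 - t) • xt + t • p = xt + t • w := by rw [hw]; module
        rw [harg2] at h; exact h
      rw [harg, hexp, hlin] at key
      have h2 : 0 ≤ t * ((⟪f' x₀, w⟫ + ⟪H (xt - x₀), w⟫ + g p - g xt) + t * (⟪H w, w⟫ / 2)) := by
        nlinarith
      nlinarith
    rw [inner_add_left]; linarith
  -- combine the two subgradient inequalities
  have hstar := hproxsub v xt
  rw [← hp] at hstar
  have hvec : (v - p) + (f' x₀ + H (xt - x₀)) = e - H e - H w := by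
    have h3 : H (xh - x₀) = H e + H w + H (xt - x₀) := by
      rw [← map_add, ← map_add]; congr 1; rw [he, hw]; abel
    rw [hv, h3, he]; abel
  have hinner1 : ⟪p - v, xt - p⟫ = ⟪v - p, w⟫ := by
    have h4 : xt - p = -w := by rw [hw]; abel
    have h5 : p - v = -(v - p) := by abel
    rw [h4, h5, inner_neg_neg]
  have hkey : ⟪H w, w⟫ ≤ ⟪e, w⟫ - ⟪H e, w⟫ := by
    have hsum : 0 ≤ ⟪(v - p) + (f' x₀ + H (xt - x₀)), w⟫ := by
      rw [inner_add_left]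
      rw [hinner1] at hstar
      linarith [hstar, hqsub]
    rw [hvec, inner_sub_left, inner_sub_left] at hsum
    linarith
  -- strong convexity lower bound and operator upper bound
  have hHw : μ * ‖w‖ ^ 2 ≤ ⟪H w, w⟫ := by
    rw [hHapp, inner_add_left, real_inner_smul_left, real_inner_self_eq_norm_sq]
    nlinarith [hpsd w]
  have hbound : ⟪e, w⟫ - ⟪H e, w⟫ ≤ (L₁ + |1 - μ|) * ‖e‖ * ‖w‖ := by
    rw [hHapp, inner_add_left, real_inner_smul_left]
    have h1 : |⟪hess x₀ e, w⟫| ≤ L₁ * ‖e‖ * ‖w‖ :=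
      bilin_bound (hess x₀) (hsa x₀) hpsd hL1 hub e w
    have h2 : |(1 - μ) * ⟪e, w⟫| ≤ |1 - μ| * ‖e‖ * ‖w‖ := by
      rw [abs_mul]
      have := abs_real_inner_le_norm e w
      have : |⟪e, w⟫| ≤ ‖e‖ * ‖w‖ := this
      nlinarith [abs_nonneg (1 - μ)]
    have h3 := abs_le.mp h1
    have h4 := abs_le.mp h2
    nlinarith
  -- norm of e
  have hen : ‖e‖ ≤ η * r x₀ ^ (1 + ρ) := by
    have : rH xh = ‖e‖ := by rw [hrH, he, hp, hv]
    linarith [hxh, this.symm.le]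
  have hen0 : 0 ≤ ‖e‖ := norm_nonneg _
  have hwn0 : 0 ≤ ‖w‖ := norm_nonneg _
  -- bound on w
  have hwb : ‖w‖ ≤ ((L₁ + |1 - μ|) * ‖e‖) / μ := by
    rcases eq_or_lt_of_le hwn0 with h0 | h0
    · rw [← h0]; positivity
    · rw [le_div_iff₀ hμpos]
      nlinarith
  -- final computation
  have hcalc : ((L₁ + |1 - μ|) * (η * r x₀ ^ (1 + ρ))) / μ
      = (η * (L₁ + |1 - μ|) / c) * r x₀ := by
    rw [hμ, Real.rpow_add hrx₀, Real.rpow_one]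
    have hpow : 0 < r x₀ ^ ρ := Real.rpow_pos_of_pos hrx₀ ρ
    field_simp
  have hwb2 : ‖w‖ ≤ (η * (L₁ + |1 - μ|) / c) * r x₀ := by
    rw [← hcalc]
    refine hwb.trans ?_
    have h9 : (L₁ + |1 - μ|) * ‖e‖ ≤ (L₁ + |1 - μ|) * (η * r x₀ ^ (1 + ρ)) :=
      mul_le_mul_of_nonneg_left hen (add_nonneg hL1 (abs_nonneg _))
    exact (div_le_div_iff_of_pos_right hμpos).mpr h9
  have htri : ‖xh - xt‖ ≤ ‖e‖ + ‖w‖ := by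
    have : xh - xt = e + w := by rw [he, hw]; abel
    rw [this]; exact norm_add_le _ _
  linarith
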